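/- Let (V; L, R) be a bimodule over a pre-Lie algebra (g, ·), N ∈ gl(g) and S ∈ gl(V). Then N is a Nijenhuis operator on g and S satisfies L_{N(x)}S(v) = S(L_{N(x)}v + L_x S(v) − S(L_x v)) and R_{N(x)}S(v) = S(R_{N(x)}v + R_x S(v) − S(R_x v)) for all x ∈ g, v ∈ V, if and only if N + S (acting diagonally) is a Nijenhuis operator on the semidirect product pre-Lie algebra g ⋉_{L,R} V. -/
import Mathlib


def PreLieFn {g : Type*} [AddCommGroup g] (m : g → g → g) : Prop :=
  ∀ x y z : g, m (m x y) z - m x (m y z) = m (m y x) z - m y (m x z)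

def BimodFn {g V : Type*} [AddCommGroup g] [AddCommGroup V]
    (m : g → g → g) (L R : g → V → V) : Prop :=
  (∀ (x y : g) (u : V), L x (L y u) - L (m x y) u = L y (L x u) - L (m y x) u) ∧
  (∀ (x y : g) (u : V), L x (R y u) - R y (L x u) = R (m x y) u - R y (R x u))

def NijFn {g : Type*} [AddCommGroup g] (m : g → g → g) (N : g → g) : Prop :=
  ∀ x y : g, m (N x) (N y) = N (m (N x) y + m x (N y) - N (m x y))

/-- `N` is Nijenhuis on `g` and `S` satisfies the two compatibility
conditions iff `N + S` (acting diagonally) is a Nijenhuis operator on the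
semidirect product pre-Lie algebra `g ⋉ V`. -/
theorem nijenhuis_pair_iff_semidirect_nijenhuis {K g V : Type*} [Field K]
    [AddCommGroup g] [Module K g] [AddCommGroup V] [Module K V]
    (m : g →ₗ[K] g →ₗ[K] g) (hm : PreLieFn (fun x y => m x y))
    (L R : g →ₗ[K] Module.End K V)
    (hb : BimodFn (fun x y => m x y) (fun x u => L x u) (fun x u => R x u))
    (N : Module.End K g) (S : Module.End K V) :
    (NijFn (fun x y => m x y) N ∧
      (∀ (x : g) (v : V), L (N x) (S v) = S (L (N x) v + L x (S v) - S (L x v))) ∧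
      (∀ (x : g) (v : V), R (N x) (S v) = S (R (N x) v + R x (S v) - S (R x v)))) ↔
    NijFn (fun p q : g × V => (m p.1 q.1, L p.1 q.2 + R q.1 p.2))
      (fun p : g × V => (N p.1, S p.2)) := by
  constructor
  · rintro ⟨hN, hL, hR⟩ ⟨x, u⟩ ⟨y, v⟩
    refine Prod.ext ?_ ?_
    · simpa using hN x y
    · have h1 := hL x v
      have h2 := hR y u
      simp only [Prod.mk_add_mk, Prod.mk_sub_mk, Prod.snd_add, Prod.snd_sub,
        map_add, map_sub] at *
      rw [h1, h2]
      abel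
  · intro h
    refine ⟨?_, ?_, ?_⟩
    · intro x y
      have := h (x, 0) (y, 0)
      simpa using congrArg Prod.fst this
    · intro x v
      have := h (x, 0) (0, v)
      have h2 := congrArg Prod.snd this
      simp only [Prod.mk_add_mk, Prod.mk_sub_mk, map_zero, map_add, map_sub,
        LinearMap.zero_apply, add_zero, zero_add] at h2
      rw [h2]; simp only [map_add, map_sub, map_smul]; try abel
    · intro x v
      have := h (0, v) (x, 0)
      have h2 := congrArg Prod.snd this
      simp only [Prod.mk_add_mk, Prod.mk_sub_mk, map_zero, map_add, map_sub,
        LinearMap.zero_apply, add_zero, zero_add] at h2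
      rw [h2]; simp only [map_add, map_sub, map_smul]; try abel
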